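/- There exists a constant C > 0 such that for all real numbers λ, μ ≥ 0 and all ξ, η ∈ Matrix (Fin 3) (Fin 3) ℝ, |F_{λ,μ}(ξ) − F_{λ,μ}(η)| ≤ C(λ+μ)(1 + ‖ξ‖² + ‖η‖²)^{3/2}‖ξ − η‖, where F_{λ,μ}(ξ) := (λ/2)·(tr Ẽ(ξ))² + μ·‖Ẽ(ξ)‖² and Ẽ(ξ) := (1/2)(ξ + ξᵀ + ξᵀξ). -/
import Mathlib


open Matrix

/-- The Frobenius norm of a real matrix: `‖ξ‖ = (tr(ξᵀξ))^(1/2)`. -/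
noncomputable def frobNorm {M N : ℕ} (ξ : Matrix (Fin M) (Fin N) ℝ) : ℝ :=
  Real.sqrt ((ξᵀ * ξ).trace)

/-- The Green-Saint Venant strain tensor `Ẽ(ξ) = (1/2)(ξ + ξᵀ + ξᵀξ)`. -/
noncomputable def Etil (ξ : Matrix (Fin 3) (Fin 3) ℝ) : Matrix (Fin 3) (Fin 3) ℝ :=
  (1 / 2 : ℝ) • (ξ + ξᵀ + ξᵀ * ξ)

/-- The Saint Venant–Kirchhoff hyper-elastic energy density with Lamé
coefficients `l, m`: `F(ξ) = (l/2)(tr Ẽ(ξ))² + m‖Ẽ(ξ)‖²`. -/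
noncomputable def Fsvk (l m : ℝ) (ξ : Matrix (Fin 3) (Fin 3) ℝ) : ℝ :=
  l / 2 * (Etil ξ).trace ^ 2 + m * frobNorm (Etil ξ) ^ 2

set_option maxHeartbeats 1000000

section aux

attribute [local instance] Matrix.frobeniusNormedAddCommGroup Matrix.frobeniusNormedSpace

lemma frobNorm_eq {M N : ℕ} (ξ : Matrix (Fin M) (Fin N) ℝ) : frobNorm ξ = ‖ξ‖ := by
  rw [frobNorm, Matrix.frobenius_norm_def, Real.sqrt_eq_rpow]
  congr 1
  simp only [Matrix.trace, Matrix.diag, Matrix.mul_apply, Matrix.transpose_apply,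
    Real.rpow_two, Real.norm_eq_abs, sq_abs]
  rw [Finset.sum_comm]
  simp [pow_two]

lemma norm_half : ‖(1/2 : ℝ)‖ = 1/2 := by
  rw [Real.norm_eq_abs]; norm_num

lemma entry_abs_le {M N : ℕ} (A : Matrix (Fin M) (Fin N) ℝ) (i : Fin M) (j : Fin N) :
    |A i j| ≤ ‖A‖ := by
  rw [Matrix.frobenius_norm_def, ← Real.sqrt_eq_rpow]
  have h : |A i j| ^ (2:ℝ) ≤ ∑ k, ∑ l, ‖A k l‖ ^ (2:ℝ) := by
    calc |A i j| ^ (2:ℝ) = ‖A i j‖ ^ (2:ℝ) := by rw [Real.norm_eq_abs]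
      _ ≤ ∑ l, ‖A i l‖ ^ (2:ℝ) :=
        Finset.single_le_sum (f := fun l => ‖A i l‖ ^ (2:ℝ))
          (fun _ _ => Real.rpow_nonneg (norm_nonneg _) _) (Finset.mem_univ j)
      _ ≤ ∑ k, ∑ l, ‖A k l‖ ^ (2:ℝ) :=
        Finset.single_le_sum (f := fun k => ∑ l, ‖A k l‖ ^ (2:ℝ))
          (fun _ _ => Finset.sum_nonneg fun _ _ => Real.rpow_nonneg (norm_nonneg _) _)
          (Finset.mem_univ i)
  have := Real.sqrt_le_sqrt h
  rwa [Real.rpow_two, Real.sqrt_sq_eq_abs, abs_abs] at this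

lemma abs_trace_le (A : Matrix (Fin 3) (Fin 3) ℝ) : |A.trace| ≤ 3 * ‖A‖ := by
  have h : |A.trace| ≤ ∑ i : Fin 3, |A i i| := by
    rw [Matrix.trace]
    exact Finset.abs_sum_le_sum_abs _ _
  have h2 : ∑ i : Fin 3, |A i i| ≤ ∑ _i : Fin 3, ‖A‖ :=
    Finset.sum_le_sum fun i _ => entry_abs_le A i i
  simp only [Finset.sum_const, Finset.card_univ, Fintype.card_fin, nsmul_eq_mul] at h2
  push_cast at h2
  linarith

/-- The first Lipschitz estimate established in the proof of Example 2 for the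
Saint Venant–Kirchhoff density. -/
theorem svk_first_lipschitz_estimate :
    ∃ C : ℝ, 0 < C ∧ ∀ l m : ℝ, 0 ≤ l → 0 ≤ m →
      ∀ ξ η : Matrix (Fin 3) (Fin 3) ℝ,
        |Fsvk l m ξ - Fsvk l m η| ≤
          C * (l + m) * (1 + frobNorm ξ ^ 2 + frobNorm η ^ 2) ^ ((3 : ℝ) / 2) *
            frobNorm (ξ - η) := by
  refine ⟨25, by norm_num, fun l m hl hm ξ η => ?_⟩
  simp only [frobNorm_eq]
  set a := ‖ξ‖ with ha
  set b := ‖η‖ with hb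
  set d := ‖ξ - η‖ with hd
  have ha0 : 0 ≤ a := norm_nonneg _
  have hb0 : 0 ≤ b := norm_nonneg _
  have hd0 : 0 ≤ d := norm_nonneg _
  clear_value a b d
  set S : ℝ := 1 + a ^ 2 + b ^ 2 with hS
  clear_value S
  have hS1 : (1:ℝ) ≤ S := by nlinarith
  have hS0 : (0:ℝ) < S := by linarith
  have hsq1 : 1 ≤ Real.sqrt S := by
    rw [show (1:ℝ) = Real.sqrt 1 by simp]; exact Real.sqrt_le_sqrt hS1
  have hsqS : Real.sqrt S ≤ S := by
    nlinarith [Real.sq_sqrt hS0.le, Real.sqrt_nonneg S]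
  have haS : a ≤ Real.sqrt S := by
    rw [show a = Real.sqrt (a^2) by rw [Real.sqrt_sq ha0]]
    exact Real.sqrt_le_sqrt (by nlinarith)
  have hbS : b ≤ Real.sqrt S := by
    rw [show b = Real.sqrt (b^2) by rw [Real.sqrt_sq hb0]]
    exact Real.sqrt_le_sqrt (by nlinarith)
  have hrpow : S ^ ((3:ℝ)/2) = S * Real.sqrt S := by
    rw [show (3:ℝ)/2 = 1 + 1/2 by norm_num, Real.rpow_add hS0, Real.rpow_one,
      Real.sqrt_eq_rpow]
  -- basic norm facts
  have tsub : ‖(ξ - η)ᵀ‖ = d := (Matrix.frobenius_norm_transpose _).trans hd.symm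
  have txi : ‖ξᵀ‖ = a := (Matrix.frobenius_norm_transpose _).trans ha.symm
  have teta : ‖ηᵀ‖ = b := (Matrix.frobenius_norm_transpose _).trans hb.symm
  -- strain bounds
  have hEsub : ‖Etil ξ - Etil η‖ ≤ (1 + (a + b)/2) * d := by
    have key : Etil ξ - Etil η =
        (1/2 : ℝ) • ((ξ - η) + (ξ - η)ᵀ + (ξᵀ * (ξ - η) + (ξ - η)ᵀ * η)) := by
      simp only [Etil, ← smul_sub]
      congr 1
      simp only [Matrix.transpose_sub, Matrix.sub_mul, Matrix.mul_sub]
      noncomm_ring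
    rw [key, norm_smul, norm_half]
    have t2 : ‖ξᵀ * (ξ - η)‖ ≤ a * d :=
      (Matrix.frobenius_norm_mul _ _).trans (by rw [txi, ← hd])
    have t3 : ‖(ξ - η)ᵀ * η‖ ≤ d * b :=
      (Matrix.frobenius_norm_mul _ _).trans (by rw [tsub, ← hb])
    have h1 : ‖(ξ - η) + (ξ - η)ᵀ + (ξᵀ * (ξ - η) + (ξ - η)ᵀ * η)‖
        ≤ (d + d) + (a * d + d * b) := by
      refine (norm_add_le _ _).trans (add_le_add ?_ ?_)
      · exact (norm_add_le _ _).trans (by rw [tsub, ← hd])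
      · exact (norm_add_le _ _).trans (add_le_add t2 t3)
    nlinarith [norm_nonneg ((ξ - η) + (ξ - η)ᵀ + (ξᵀ * (ξ - η) + (ξ - η)ᵀ * η))]
  have hEx : ‖Etil ξ‖ ≤ a + a^2/2 := by
    rw [Etil, norm_smul, norm_half]
    have t2 : ‖ξᵀ * ξ‖ ≤ a * a := (Matrix.frobenius_norm_mul _ _).trans (by rw [txi, ← ha])
    have h1 : ‖ξ + ξᵀ + ξᵀ * ξ‖ ≤ (a + a) + a * a := by
      refine (norm_add_le _ _).trans (add_le_add ?_ t2)
      exact (norm_add_le _ _).trans (by rw [txi, ← ha])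
    nlinarith [norm_nonneg (ξ + ξᵀ + ξᵀ * ξ)]
  have hEy : ‖Etil η‖ ≤ b + b^2/2 := by
    rw [Etil, norm_smul, norm_half]
    have t2 : ‖ηᵀ * η‖ ≤ b * b := (Matrix.frobenius_norm_mul _ _).trans (by rw [teta, ← hb])
    have h1 : ‖η + ηᵀ + ηᵀ * η‖ ≤ (b + b) + b * b := by
      refine (norm_add_le _ _).trans (add_le_add ?_ t2)
      exact (norm_add_le _ _).trans (by rw [teta, ← hb])
    nlinarith [norm_nonneg (η + ηᵀ + ηᵀ * η)]
  set P := Etil ξ with hP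
  set Q := Etil η with hQ
  clear_value P Q
  have hP0 : 0 ≤ ‖P‖ := norm_nonneg _
  have hQ0 : 0 ≤ ‖Q‖ := norm_nonneg _
  have hPQd0 : 0 ≤ ‖P - Q‖ := norm_nonneg _
  have htr : |P.trace ^ 2 - Q.trace ^ 2| ≤ 9 * (‖P‖ + ‖Q‖) * ‖P - Q‖ := by
    have h1 : P.trace ^ 2 - Q.trace ^ 2 = (P.trace + Q.trace) * (P.trace - Q.trace) := by ring
    rw [h1, abs_mul]
    have h2 : |P.trace + Q.trace| ≤ 3 * ‖P‖ + 3 * ‖Q‖ :=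
      (abs_add_le _ _).trans (add_le_add (abs_trace_le P) (abs_trace_le Q))
    have h3 : |P.trace - Q.trace| ≤ 3 * ‖P - Q‖ := by
      rw [show P.trace - Q.trace = (P - Q).trace by rw [Matrix.trace_sub]]
      exact abs_trace_le _
    calc |P.trace + Q.trace| * |P.trace - Q.trace|
        ≤ (3 * ‖P‖ + 3 * ‖Q‖) * (3 * ‖P - Q‖) :=
          mul_le_mul h2 h3 (abs_nonneg _) (by positivity)
      _ = 9 * (‖P‖ + ‖Q‖) * ‖P - Q‖ := by ring
  have hnrm : |‖P‖ ^ 2 - ‖Q‖ ^ 2| ≤ (‖P‖ + ‖Q‖) * ‖P - Q‖ := by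
    have h1 : ‖P‖ ^ 2 - ‖Q‖ ^ 2 = (‖P‖ + ‖Q‖) * (‖P‖ - ‖Q‖) := by ring
    rw [h1, abs_mul, abs_of_nonneg (by positivity : (0:ℝ) ≤ ‖P‖ + ‖Q‖)]
    exact mul_le_mul_of_nonneg_left (abs_norm_sub_norm_le P Q) (by positivity)
  have hF : |Fsvk l m ξ - Fsvk l m η| ≤ 5 * (l + m) * ((‖P‖ + ‖Q‖) * ‖P - Q‖) := by
    have hexp : Fsvk l m ξ - Fsvk l m η
        = l / 2 * (P.trace ^ 2 - Q.trace ^ 2) + m * (‖P‖ ^ 2 - ‖Q‖ ^ 2) := by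
      rw [Fsvk, Fsvk, ← hP, ← hQ, frobNorm_eq P, frobNorm_eq Q]
      ring
    rw [hexp]
    calc |l / 2 * (P.trace ^ 2 - Q.trace ^ 2) + m * (‖P‖ ^ 2 - ‖Q‖ ^ 2)|
        ≤ l / 2 * |P.trace ^ 2 - Q.trace ^ 2| + m * |‖P‖ ^ 2 - ‖Q‖ ^ 2| := by
          refine (abs_add_le _ _).trans ?_
          rw [abs_mul, abs_mul, abs_of_nonneg (by linarith : (0:ℝ) ≤ l/2), abs_of_nonneg hm]
      _ ≤ l / 2 * (9 * (‖P‖ + ‖Q‖) * ‖P - Q‖) + m * ((‖P‖ + ‖Q‖) * ‖P - Q‖) := by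
          gcongr
      _ ≤ 5 * (l + m) * ((‖P‖ + ‖Q‖) * ‖P - Q‖) := by
          nlinarith [mul_nonneg (add_nonneg hP0 hQ0) hPQd0]
  have hPQ : ‖P‖ + ‖Q‖ ≤ 5/2 * S := by nlinarith
  have hsub2 : ‖P - Q‖ ≤ 2 * Real.sqrt S * d := by
    refine hEsub.trans ?_
    nlinarith
  have hmain : (‖P‖ + ‖Q‖) * ‖P - Q‖ ≤ 5 * (S * Real.sqrt S) * d := by
    calc (‖P‖ + ‖Q‖) * ‖P - Q‖ ≤ (5/2 * S) * (2 * Real.sqrt S * d) :=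
          mul_le_mul hPQ hsub2 hPQd0 (by positivity)
      _ = 5 * (S * Real.sqrt S) * d := by ring
  have hlm : 0 ≤ l + m := by linarith
  calc |Fsvk l m ξ - Fsvk l m η| ≤ 5 * (l + m) * ((‖P‖ + ‖Q‖) * ‖P - Q‖) := hF
    _ ≤ 5 * (l + m) * (5 * (S * Real.sqrt S) * d) := by gcongr
    _ = 25 * (l + m) * (S * Real.sqrt S) * d := by ring
    _ = 25 * (l + m) * S ^ ((3:ℝ)/2) * d := by rw [hrpow]

end aux
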